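/- Every integral domain satisfying the PC condition is an AP domain, i.e., every irreducible element of a PC domain is prime. -/

import Mathlib

/-- Every integral domain satisfying the PC condition (every proper
two-generated ideal is contained in a proper principal ideal) is an AP domain, i.e.
every irreducible element is prime. -/
theorem pc_domain_is_ap (R : Type*) [CommRing R] [IsDomain R]
    (hPC : ∀ a b : R, Ideal.span {a, b} ≠ (⊤ : Ideal R) →
      ∃ c : R, Ideal.span {a, b} ≤ Ideal.span {c} ∧ Ideal.span ({c} : Set R) ≠ ⊤) :
    ∀ p : R, Irreducible p → Prime p := by
  intro p hp
  refine ⟨hp.ne_zero, hp.not_isUnit, ?_⟩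
  intro a b hab
  by_cases htop : Ideal.span ({p, a} : Set R) = ⊤
  · right
    have h1 : (1 : R) ∈ Ideal.span ({p, a} : Set R) := htop ▸ Submodule.mem_top
    rw [Ideal.mem_span_pair] at h1
    obtain ⟨u, v, huv⟩ := h1
    have : b = u * p * b + v * (a * b) := by
      have := congrArg (· * b) huv
      simp at this
      linear_combination this.symm
    rw [this]
    exact dvd_add (Dvd.dvd.mul_right (Dvd.dvd.mul_left dvd_rfl u) b) (hab.mul_left v)
  · left
    obtain ⟨c, hle, hcne⟩ := hPC p a htop
    have hcp : c ∣ p := (Ideal.mem_span_singleton).1 (hle (Ideal.subset_span (by simp)))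
    have hca : c ∣ a := (Ideal.mem_span_singleton).1 (hle (Ideal.subset_span (by simp)))
    have hcnu : ¬ IsUnit c := fun h => hcne (Ideal.span_singleton_eq_top.2 h)
    obtain ⟨d, hd⟩ := hcp
    rcases hp.isUnit_or_isUnit hd with h | h
    · exact absurd h hcnu
    · obtain ⟨e, he⟩ := hca
      refine ⟨h.unit⁻¹ * e, ?_⟩
      have : (h.unit : R) = d := rfl
      rw [he, hd, mul_assoc, ← mul_assoc d, h.mul_val_inv, one_mul]
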